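/- The $m = n = 1$ Cauchy identity for spin q-Whittaker polynomials: with $\mathbb{F}_i(x) = x^i \frac{(-s/x;q)_i}{(s^2;q)_i}$ and $\mathbb{F}^*_i(y) = y^i \frac{(-s/y;q)_i}{(q;q)_i}$ for $i \geq 1$, and $\mathbb{F}_0 = \mathbb{F}^*_0 = 1$, one has $\sum_{i=0}^{\infty} \mathbb{F}_i(x) \mathbb{F}^*_i(y) = \frac{(-sx;q)_\infty (-sy;q)_\infty}{(s^2;q)_\infty (xy;q)_\infty}$ for $|q|, |s|, |x|, |y| < 1$. -/

import Mathlib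

/-- The finite q-Pochhammer symbol `(a;q)_m = ∏_{i<m} (1 - a q^i)`. -/
noncomputable def qPoch (q a : ℂ) (m : ℕ) : ℂ := ∏ i ∈ Finset.range m, (1 - a * q ^ i)

/-- `xPoch q s x k = x^k (-s/x;q)_k = ∏_{j<k} (x + s q^j)`, interpreted polynomially. -/
noncomputable def xPoch (q s x : ℂ) (k : ℕ) : ℂ := ∏ j ∈ Finset.range k, (x + s * q ^ j)

open Filter Finset Topology

namespace SQW

lemma one_sub_ne {w : ℂ} (h : ‖w‖ < 1) : 1 - w ≠ 0 := by
  intro h0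
  rw [sub_eq_zero] at h0
  rw [← h0] at h
  simp at h

lemma norm_mul_pow_lt {q w : ℂ} (hq : ‖q‖ < 1) (hw : ‖w‖ < 1) (k : ℕ) : ‖w * q ^ k‖ < 1 := by
  rw [norm_mul, norm_pow]
  have h1 : ‖q‖ ^ k ≤ 1 := pow_le_one₀ (norm_nonneg q) hq.le
  nlinarith [norm_nonneg w, norm_nonneg q]

@[simp] lemma qPoch_zero (q a : ℂ) : qPoch q a 0 = 1 := by simp [qPoch]
@[simp] lemma xPoch_zero (q s x : ℂ) : xPoch q s x 0 = 1 := by simp [xPoch]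

lemma qPoch_succ (q a : ℂ) (n : ℕ) : qPoch q a (n+1) = qPoch q a n * (1 - a * q ^ n) :=
  Finset.prod_range_succ _ _

lemma xPoch_succ (q s x : ℂ) (n : ℕ) : xPoch q s x (n+1) = xPoch q s x n * (x + s * q ^ n) :=
  Finset.prod_range_succ _ _

lemma qPoch_ne_zero {q a : ℂ} (hq : ‖q‖ < 1) (ha : ‖a‖ < 1) (n : ℕ) : qPoch q a n ≠ 0 := by
  rw [qPoch, Finset.prod_ne_zero_iff]
  exact fun i _ => one_sub_ne (norm_mul_pow_lt hq ha i)

/-- shift lemma: `xPoch q s (q*y) (n+1) = (q*y+s) * q^n * xPoch q s y n` -/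
lemma xPoch_qshift (q s y : ℂ) (n : ℕ) :
    xPoch q s (q*y) (n+1) = (q*y + s) * q ^ n * xPoch q s y n := by
  rw [xPoch, Finset.prod_range_succ']
  simp only [pow_zero, mul_one]
  have : ∀ j ∈ Finset.range n, q*y + s * q ^ (j+1) = q * (y + s * q ^ j) := by
    intro j _; ring
  rw [Finset.prod_congr rfl this, Finset.prod_mul_distrib, Finset.prod_const,
    Finset.card_range, xPoch]
  ring

/-- shift lemma for qPoch: `qPoch q c (n+1) = (1-c) * qPoch q (q*c) n` -/
lemma qPoch_qshift (q c : ℂ) (n : ℕ) :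
    qPoch q c (n+1) = (1 - c) * qPoch q (q*c) n := by
  rw [qPoch, Finset.prod_range_succ', qPoch]
  simp only [pow_zero, mul_one]
  rw [Finset.prod_congr rfl
    (fun j (_ : j ∈ Finset.range n) => show 1 - c*q^(j+1) = 1 - (q*c)*q^j by ring)]
  ring


noncomputable def trm (q s x y : ℂ) (n : ℕ) : ℂ :=
  xPoch q s x n * xPoch q s y n / (qPoch q (s^2) n * qPoch q q n)

noncomputable def htrm (q c : ℂ) (n : ℕ) : ℂ :=
  xPoch (q^2) c 0 n / (qPoch q c n * qPoch q q n)

noncomputable def Ff (q s x y : ℂ) : ℂ := ∑' n, trm q s x y n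
noncomputable def Hf (q c : ℂ) : ℂ := ∑' n, htrm q c n

@[simp] lemma trm_zero (q s x y : ℂ) : trm q s x y 0 = 1 := by simp [trm]
@[simp] lemma htrm_zero (q c : ℂ) : htrm q c 0 = 1 := by simp [htrm]

lemma trm_comm (q s x y : ℂ) (n : ℕ) : trm q s x y n = trm q s y x n := by
  rw [trm, trm, mul_comm (xPoch q s x n)]

lemma Ff_comm (q s x y : ℂ) : Ff q s x y = Ff q s y x :=
  tsum_congr (trm_comm q s x y)

section norms
variable {q s x y c : ℂ} (hq : ‖q‖ < 1) (hs : ‖s‖ < 1)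

lemma hs2 (hs : ‖s‖ < 1) : ‖s^2‖ < 1 := by
  rw [norm_pow]; nlinarith [norm_nonneg s]

lemma d_ne (hq : ‖q‖ < 1) (hs : ‖s‖ < 1) (n : ℕ) :
    qPoch q (s^2) n * qPoch q q n ≠ 0 :=
  mul_ne_zero (qPoch_ne_zero hq (hs2 hs) n) (qPoch_ne_zero hq hq n)

lemma trm_succ (hq : ‖q‖ < 1) (hs : ‖s‖ < 1) (x y : ℂ) (n : ℕ) :
    trm q s x y (n+1)
      = ((x + s*q^n) * (y + s*q^n) / ((1 - s^2*q^n) * (1 - q^(n+1)))) * trm q s x y n := by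
  have h1 : (1 : ℂ) - s^2*q^n ≠ 0 := one_sub_ne (norm_mul_pow_lt hq (hs2 hs) n)
  have h2 : (1 : ℂ) - q^(n+1) ≠ 0 := by
    have : (1:ℂ) - q*q^n ≠ 0 := one_sub_ne (norm_mul_pow_lt hq hq n)
    rwa [pow_succ']
  have h3 := qPoch_ne_zero hq (hs2 hs) n
  have h4 := qPoch_ne_zero hq hq n
  rw [trm, trm, xPoch_succ, xPoch_succ, qPoch_succ, qPoch_succ]
  rw [show (1:ℂ) - q*q^n = 1 - q^(n+1) by rw [pow_succ']]
  field_simp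

lemma htrm_succ (hq : ‖q‖ < 1) (hc : ‖c‖ < 1) (n : ℕ) :
    htrm q c (n+1)
      = (c * (q^2)^n / ((1 - c*q^n) * (1 - q^(n+1)))) * htrm q c n := by
  have h1 : (1 : ℂ) - c*q^n ≠ 0 := one_sub_ne (norm_mul_pow_lt hq hc n)
  have h2 : (1 : ℂ) - q^(n+1) ≠ 0 := by
    have : (1:ℂ) - q*q^n ≠ 0 := one_sub_ne (norm_mul_pow_lt hq hq n)
    rwa [pow_succ']
  have h3 := qPoch_ne_zero hq hc n
  have h4 := qPoch_ne_zero hq hq n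
  rw [htrm, htrm, xPoch_succ, qPoch_succ, qPoch_succ]
  rw [show (1:ℂ) - q*q^n = 1 - q^(n+1) by rw [pow_succ']]
  field_simp
  ring

end norms

/-- ratio test: complex version -/
lemma auxC {f m : ℕ → ℂ} {L : ℝ} (hL : L < 1)
    (hm : Tendsto (fun n => ‖m n‖) atTop (𝓝 L))
    (hrec : ∀ n, f (n+1) = m n * f n) : Summable fun n => ‖f n‖ := by
  have hL0 : 0 ≤ L := ge_of_tendsto' hm fun n => norm_nonneg _
  apply summable_of_ratio_norm_eventually_le (r := (L+1)/2) (by linarith)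
  filter_upwards [hm.eventually_lt_const (show L < (L+1)/2 by linarith)] with n h
  rw [norm_norm, norm_norm, hrec, norm_mul]
  exact mul_le_mul_of_nonneg_right h.le (norm_nonneg _)

/-- ratio test: real version -/
lemma auxR {f m : ℕ → ℝ} {L : ℝ} (hL : L < 1) (hm0 : ∀ n, 0 ≤ m n)
    (hm : Tendsto m atTop (𝓝 L))
    (hrec : ∀ n, f (n+1) = m n * f n) : Summable f := by
  have hL0 : 0 ≤ L := ge_of_tendsto' hm hm0
  apply summable_of_ratio_norm_eventually_le (r := (L+1)/2) (by linarith)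
  filter_upwards [hm.eventually_lt_const (show L < (L+1)/2 by linarith)] with n h
  rw [hrec, norm_mul, Real.norm_of_nonneg (hm0 n)]
  exact mul_le_mul_of_nonneg_right h.le (norm_nonneg _)

section tend
variable {q s x y c : ℂ}

lemma tendsto_m_trm (hq : ‖q‖ < 1) (s x y : ℂ) :
    Tendsto (fun n => ‖(x + s*q^n) * (y + s*q^n) / ((1 - s^2*q^n) * (1 - q^(n+1)))‖)
      atTop (𝓝 (‖x‖ * ‖y‖)) := by
  have h0 : Tendsto (fun n : ℕ => (q:ℂ)^n) atTop (𝓝 0) :=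
    tendsto_pow_atTop_nhds_zero_of_norm_lt_one hq
  have hA : Tendsto (fun n => x + s*q^n) atTop (𝓝 x) := by
    simpa using ((h0.const_mul s).const_add x)
  have hB : Tendsto (fun n => y + s*q^n) atTop (𝓝 y) := by
    simpa using ((h0.const_mul s).const_add y)
  have hC : Tendsto (fun n => (1:ℂ) - s^2*q^n) atTop (𝓝 1) := by
    simpa using ((h0.const_mul (s^2)).const_sub 1)
  have hD : Tendsto (fun n => (1:ℂ) - q^(n+1)) atTop (𝓝 1) := by
    have : Tendsto (fun n : ℕ => (q:ℂ)^(n+1)) atTop (𝓝 0) := by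
      simpa [pow_succ] using h0.mul_const q
    simpa using this.const_sub 1
  have := ((hA.mul hB).div (hC.mul hD) (by norm_num)).norm
  simpa using this

lemma summable_norm_trm (hq : ‖q‖ < 1) (hs : ‖s‖ < 1) (hx : ‖x‖ < 1) (hy : ‖y‖ < 1) :
    Summable fun n => ‖trm q s x y n‖ :=
  auxC (by nlinarith [norm_nonneg x, norm_nonneg y]) (tendsto_m_trm hq s x y)
    (trm_succ hq hs x y)

lemma summable_trm (hq : ‖q‖ < 1) (hs : ‖s‖ < 1) (hx : ‖x‖ < 1) (hy : ‖y‖ < 1) :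
    Summable (trm q s x y) :=
  (summable_norm_trm hq hs hx hy).of_norm

lemma tendsto_m_htrm (hq : ‖q‖ < 1) (c : ℂ) :
    Tendsto (fun n => ‖c * (q^2)^n / ((1 - c*q^n) * (1 - q^(n+1)))‖) atTop (𝓝 0) := by
  have h0 : Tendsto (fun n : ℕ => (q:ℂ)^n) atTop (𝓝 0) :=
    tendsto_pow_atTop_nhds_zero_of_norm_lt_one hq
  have hq2 : ‖q^2‖ < 1 := by rw [norm_pow]; nlinarith [norm_nonneg q]
  have h02 : Tendsto (fun n : ℕ => ((q:ℂ)^2)^n) atTop (𝓝 0) :=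
    tendsto_pow_atTop_nhds_zero_of_norm_lt_one hq2
  have hA : Tendsto (fun n => c * (q^2)^n) atTop (𝓝 0) := by
    simpa using h02.const_mul c
  have hC : Tendsto (fun n => (1:ℂ) - c*q^n) atTop (𝓝 1) := by
    simpa using ((h0.const_mul c).const_sub 1)
  have hD : Tendsto (fun n => (1:ℂ) - q^(n+1)) atTop (𝓝 1) := by
    have : Tendsto (fun n : ℕ => (q:ℂ)^(n+1)) atTop (𝓝 0) := by
      simpa [pow_succ] using h0.mul_const q
    simpa using this.const_sub 1
  have := (hA.div (hC.mul hD) (by norm_num)).norm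
  simpa using this

lemma summable_norm_htrm (hq : ‖q‖ < 1) (hc : ‖c‖ < 1) :
    Summable fun n => ‖htrm q c n‖ :=
  auxC one_pos (tendsto_m_htrm hq c) (htrm_succ hq hc)

lemma summable_htrm (hq : ‖q‖ < 1) (hc : ‖c‖ < 1) : Summable (htrm q c) :=
  (summable_norm_htrm hq hc).of_norm

end tend

/-- telescoping sum -/
lemma telescope {v : ℕ → ℂ} (hv : Summable v) : ∑' n, (v n - v (n+1)) = v 0 := by
  have hsm : Summable (fun n => v n - v (n+1)) := hv.sub ((summable_nat_add_iff 1).2 hv)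
  refine HasSum.tsum_eq ?_
  rw [hsm.hasSum_iff_tendsto_nat]
  have h0 : Tendsto (fun N => v 0 - v N) atTop (𝓝 (v 0 - 0)) :=
    tendsto_const_nhds.sub hv.tendsto_atTop_zero
  simpa using h0.congr fun N => (Finset.sum_range_sub' v N).symm

section FE
variable {q s x y c : ℂ}

lemma trm_qy_succ (hq : ‖q‖ < 1) (hs : ‖s‖ < 1) (x y : ℂ) (n : ℕ) :
    trm q s x (q*y) (n+1)
      = ((x + s*q^n) * ((q*y + s) * q^n) / ((1 - s^2*q^n) * (1 - q^(n+1)))) * trm q s x y n := by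
  have h1 : (1 : ℂ) - s^2*q^n ≠ 0 := one_sub_ne (norm_mul_pow_lt hq (hs2 hs) n)
  have h2 : (1 : ℂ) - q^(n+1) ≠ 0 := by
    have : (1:ℂ) - q*q^n ≠ 0 := one_sub_ne (norm_mul_pow_lt hq hq n)
    rwa [pow_succ']
  have h3 := qPoch_ne_zero hq (hs2 hs) n
  have h4 := qPoch_ne_zero hq hq n
  rw [trm, trm, xPoch_qshift, xPoch_succ, qPoch_succ, qPoch_succ]
  rw [show (1:ℂ) - q*q^n = 1 - q^(n+1) by rw [pow_succ']]
  field_simp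

lemma FE2 (hq : ‖q‖ < 1) (hs : ‖s‖ < 1) (hx : ‖x‖ < 1) (hy : ‖y‖ < 1) :
    (1 - x*y) * Ff q s x y = (1 + s*y) * Ff q s x (q*y) := by
  have hqy : ‖q*y‖ < 1 := by rw [norm_mul]; nlinarith [norm_nonneg q, norm_nonneg y]
  have S1 : Summable (trm q s x y) := summable_trm hq hs hx hy
  have S2 : Summable (trm q s x (q*y)) := summable_trm hq hs hx hqy
  set v : ℕ → ℂ := fun n => trm q s x y n * (1 + s*y*q^n) with hv
  have hvsum : Summable v := by
    have h1 : Summable (fun n => (s*y) * (q^n * trm q s x y n)) := by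
      refine Summable.mul_left _ (Summable.of_norm ?_)
      refine Summable.of_nonneg_of_le (fun n => norm_nonneg _) (fun n => ?_)
        (summable_norm_trm hq hs hx hy)
      rw [norm_mul, norm_pow]
      have h1 : ‖q‖ ^ n ≤ 1 := pow_le_one₀ (norm_nonneg q) hq.le
      nlinarith [norm_nonneg (trm q s x y n)]
    refine (S1.add h1).congr fun n => ?_
    simp only [hv]; ring
  have key : ∀ n, (1 - x*y) * trm q s x y n - (1 + s*y) * trm q s x (q*y) (n+1)
      = v n - v (n+1) := by
    intro n
    have h1 : (1 : ℂ) - s^2*q^n ≠ 0 := one_sub_ne (norm_mul_pow_lt hq (hs2 hs) n)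
    have h2 : (1 : ℂ) - q^(n+1) ≠ 0 := by
      have : (1:ℂ) - q*q^n ≠ 0 := one_sub_ne (norm_mul_pow_lt hq hq n)
      rwa [pow_succ']
    rw [trm_qy_succ hq hs x y n]
    simp only [hv]
    rw [trm_succ hq hs x y n]
    field_simp
    ring
  have hT : ∑' n, ((1 - x*y) * trm q s x y n - (1 + s*y) * trm q s x (q*y) (n+1))
      = 1 + s*y := by
    rw [tsum_congr key, telescope hvsum]
    simp [hv]
  rw [Summable.tsum_sub (S1.mul_left _) (((summable_nat_add_iff 1).2 S2).mul_left _),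
    tsum_mul_left, tsum_mul_left] at hT
  rw [Ff, Ff, Summable.tsum_eq_zero_add S2, trm_zero]
  linear_combination hT

lemma xPoch_zero_smul (w u v : ℂ) (n : ℕ) : xPoch w (u*v) 0 n = u^n * xPoch w v 0 n := by
  rw [xPoch, xPoch]
  rw [Finset.prod_congr rfl
    (fun j (_ : j ∈ Finset.range n) => show (0:ℂ) + u*v*w^j = u * (0 + v*w^j) by ring)]
  rw [Finset.prod_mul_distrib, Finset.prod_const, Finset.card_range]

lemma FE0 (hq : ‖q‖ < 1) (hc : ‖c‖ < 1) :
    (1 - c) * Hf q c = Hf q (q*c) := by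
  have hqc : ‖q*c‖ < 1 := by rw [norm_mul]; nlinarith [norm_nonneg q, norm_nonneg c]
  have hcne : (1 : ℂ) - c ≠ 0 := one_sub_ne hc
  have S1 : Summable (htrm q c) := summable_htrm hq hc
  have S2 : Summable (htrm q (q*c)) := summable_htrm hq hqc
  set w : ℕ → ℂ := fun n => htrm q c n * (1 - q^n) with hw
  have hwsum : Summable w := by
    have h1 : Summable (fun n => q^n * htrm q c n) := by
      refine Summable.of_norm ?_
      refine Summable.of_nonneg_of_le (fun n => norm_nonneg _) (fun n => ?_)
        (summable_norm_htrm hq hc)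
      rw [norm_mul, norm_pow]
      have h1 : ‖q‖ ^ n ≤ 1 := pow_le_one₀ (norm_nonneg q) hq.le
      nlinarith [norm_nonneg (htrm q c n)]
    refine (S1.sub h1).congr fun n => ?_
    simp only [hw]; ring
  have key : ∀ n, (1 - c) * htrm q c n - htrm q (q*c) n = (1 - c) * (w n - w (n+1)) := by
    intro n
    have h1 : (1 : ℂ) - c*q^n ≠ 0 := one_sub_ne (norm_mul_pow_lt hq hc n)
    have h2 : (1 : ℂ) - q^(n+1) ≠ 0 := by
      have : (1:ℂ) - q*q^n ≠ 0 := one_sub_ne (norm_mul_pow_lt hq hq n)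
      rwa [pow_succ']
    have h3 := qPoch_ne_zero hq hc n
    have h4 := qPoch_ne_zero hq hq n
    have h5 : qPoch q (q*c) n ≠ 0 := qPoch_ne_zero hq hqc n
    have hsh : qPoch q (q*c) n = qPoch q c n * (1 - c*q^n) / (1 - c) := by
      have h6 : (1 - c) * qPoch q (q*c) n = qPoch q c n * (1 - c*q^n) :=
        (qPoch_qshift q c n).symm.trans (qPoch_succ q c n)
      rw [eq_div_iff hcne]
      linear_combination h6
    have hqc2' : htrm q (q*c) n * (1 - c*q^n) = (1 - c) * q^n * htrm q c n := by
      have h1' : (1:ℂ) - q^n*c ≠ 0 := by rwa [mul_comm]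
      rw [htrm, htrm, xPoch_zero_smul, hsh]
      field_simp
    have hsucc' : htrm q c (n+1) * ((1 - c*q^n) * (1 - q^(n+1)))
        = c * (q^n * q^n) * htrm q c n := by
      rw [htrm_succ hq hc n,
        show ((q:ℂ)^2)^n = q^n * q^n by rw [← pow_mul, mul_comm 2 n, pow_mul, sq]]
      field_simp
    simp only [hw]
    apply mul_left_cancel₀ h1
    linear_combination (-1 : ℂ) * hqc2' + (1 - c) * hsucc'
  have hT : ∑' n, ((1 - c) * htrm q c n - htrm q (q*c) n) = 0 := by
    rw [tsum_congr key, tsum_mul_left, telescope hwsum]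
    simp [hw]
  rw [Summable.tsum_sub (S1.mul_left _) S2, tsum_mul_left] at hT
  rw [Hf, Hf]
  linear_combination hT

end FE

section iter
variable {q s x y c : ℂ}

lemma iter2 (hq : ‖q‖ < 1) (hs : ‖s‖ < 1) (hx : ‖x‖ < 1) (hy : ‖y‖ < 1) :
    ∀ N, (∏ k ∈ Finset.range N, (1 - x*y*q^k)) * Ff q s x y
      = (∏ k ∈ Finset.range N, (1 - (-s*y)*q^k)) * Ff q s x (q^N * y) := by
  intro N
  induction N with
  | zero => simp
  | succ N ih =>
    have hyN : ‖q^N * y‖ < 1 := by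
      rw [norm_mul, norm_pow]
      have h1 : ‖q‖ ^ N ≤ 1 := pow_le_one₀ (norm_nonneg q) hq.le
      nlinarith [norm_nonneg y]
    have hfe := FE2 hq hs hx hyN
    rw [show (q:ℂ)^(N+1) * y = q * (q^N * y) by ring]
    rw [Finset.prod_range_succ, Finset.prod_range_succ]
    linear_combination (1 - x*y*q^N) * ih
      + (∏ k ∈ Finset.range N, (1 - (-s*y)*q^k)) * hfe

lemma iter0 (hq : ‖q‖ < 1) (hc : ‖c‖ < 1) :
    ∀ N, (∏ k ∈ Finset.range N, (1 - c*q^k)) * Hf q c = Hf q (q^N * c) := by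
  intro N
  induction N with
  | zero => simp
  | succ N ih =>
    have hcN : ‖q^N * c‖ < 1 := by
      rw [norm_mul, norm_pow]
      have h1 : ‖q‖ ^ N ≤ 1 := pow_le_one₀ (norm_nonneg q) hq.le
      nlinarith [norm_nonneg c]
    have hfe := FE0 hq hcN
    rw [show (q:ℂ)^(N+1) * c = q * (q^N * c) by ring]
    rw [Finset.prod_range_succ]
    linear_combination (1 - c*q^N) * ih + hfe

end iter

section DC
variable {q s x y c : ℂ}

noncomputable def Bnd (q s x y : ℂ) (n : ℕ) : ℝ :=
  (∏ j ∈ Finset.range n, (‖x‖ + ‖s‖*‖q‖^j)) * (∏ j ∈ Finset.range n, (‖y‖ + ‖s‖*‖q‖^j))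
    / (‖qPoch q (s^2) n‖ * ‖qPoch q q n‖)

lemma norm_trm_le (hq : ‖q‖ < 1) (hs : ‖s‖ < 1) {z : ℂ} (hz : ‖z‖ ≤ ‖y‖) (n : ℕ) :
    ‖trm q s x z n‖ ≤ Bnd q s x y n := by
  have hd1 : (0:ℝ) < ‖qPoch q (s^2) n‖ :=
    norm_pos_iff.2 (qPoch_ne_zero hq (hs2 hs) n)
  have hd2 : (0:ℝ) < ‖qPoch q q n‖ := norm_pos_iff.2 (qPoch_ne_zero hq hq n)
  have hX : ‖xPoch q s x n‖ ≤ ∏ j ∈ Finset.range n, (‖x‖ + ‖s‖*‖q‖^j) := by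
    rw [xPoch, norm_prod]
    refine Finset.prod_le_prod (fun j _ => norm_nonneg _) (fun j _ => ?_)
    refine (norm_add_le _ _).trans ?_
    rw [norm_mul, norm_pow]
  have hZ : ‖xPoch q s z n‖ ≤ ∏ j ∈ Finset.range n, (‖y‖ + ‖s‖*‖q‖^j) := by
    rw [xPoch, norm_prod]
    refine Finset.prod_le_prod (fun j _ => norm_nonneg _) (fun j _ => ?_)
    refine (norm_add_le _ _).trans ?_
    rw [norm_mul, norm_pow]
    exact add_le_add hz le_rfl
  rw [trm, Bnd, norm_div, norm_mul, norm_mul]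
  refine div_le_div₀ (by positivity)
    (mul_le_mul hX hZ (norm_nonneg _) (Finset.prod_nonneg fun j _ => by positivity))
    (by positivity) le_rfl

lemma summable_Bnd (hq : ‖q‖ < 1) (hs : ‖s‖ < 1) (hx : ‖x‖ < 1) (hy : ‖y‖ < 1) :
    Summable (Bnd q s x y) := by
  have h0C : Tendsto (fun n : ℕ => (q:ℂ)^n) atTop (𝓝 0) :=
    tendsto_pow_atTop_nhds_zero_of_norm_lt_one hq
  have h0R : Tendsto (fun n : ℕ => ‖q‖^n) atTop (𝓝 0) :=
    tendsto_pow_atTop_nhds_zero_of_lt_one (norm_nonneg q) hq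
  refine auxR (m := fun n =>
      ((‖x‖ + ‖s‖*‖q‖^n) * (‖y‖ + ‖s‖*‖q‖^n)) / (‖1 - s^2*q^n‖ * ‖1 - q^(n+1)‖))
    (L := ‖x‖ * ‖y‖) (by nlinarith [norm_nonneg x, norm_nonneg y])
    (fun n => by positivity) ?_ ?_
  · have hA : Tendsto (fun n => ‖x‖ + ‖s‖*‖q‖^n) atTop (𝓝 ‖x‖) := by
      simpa using (h0R.const_mul ‖s‖).const_add ‖x‖
    have hB : Tendsto (fun n => ‖y‖ + ‖s‖*‖q‖^n) atTop (𝓝 ‖y‖) := by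
      simpa using (h0R.const_mul ‖s‖).const_add ‖y‖
    have hC : Tendsto (fun n => ‖(1:ℂ) - s^2*q^n‖) atTop (𝓝 1) := by
      have := ((h0C.const_mul (s^2)).const_sub 1).norm
      simpa using this
    have hD : Tendsto (fun n => ‖(1:ℂ) - q^(n+1)‖) atTop (𝓝 1) := by
      have h1 : Tendsto (fun n : ℕ => (q:ℂ)^(n+1)) atTop (𝓝 0) := by
        simpa [pow_succ] using h0C.mul_const q
      have := (h1.const_sub 1).norm
      simpa using this
    have := (hA.mul hB).div (hC.mul hD) (by norm_num)
    convert this using 2 <;> simp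
  · intro n
    have hd1 : (0:ℝ) < ‖qPoch q (s^2) n‖ :=
      norm_pos_iff.2 (qPoch_ne_zero hq (hs2 hs) n)
    have hd2 : (0:ℝ) < ‖qPoch q q n‖ := norm_pos_iff.2 (qPoch_ne_zero hq hq n)
    have hd3 : (0:ℝ) < ‖(1:ℂ) - s^2*q^n‖ :=
      norm_pos_iff.2 (one_sub_ne (norm_mul_pow_lt hq (hs2 hs) n))
    have hd4 : (0:ℝ) < ‖(1:ℂ) - q^(n+1)‖ := by
      refine norm_pos_iff.2 ?_
      have : (1:ℂ) - q*q^n ≠ 0 := one_sub_ne (norm_mul_pow_lt hq hq n)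
      rwa [pow_succ']
    rw [Bnd, Bnd, Finset.prod_range_succ, Finset.prod_range_succ,
      qPoch_succ, qPoch_succ, norm_mul, norm_mul,
      show (1:ℂ) - q*q^n = 1 - q^(n+1) by rw [pow_succ']]
    beta_reduce
    rw [div_mul_div_comm, div_eq_div_iff (by positivity) (by positivity)]
    ring

lemma DCy (hq : ‖q‖ < 1) (hs : ‖s‖ < 1) (hx : ‖x‖ < 1) (hy : ‖y‖ < 1) :
    Tendsto (fun N => Ff q s x (q^N * y)) atTop (𝓝 (Ff q s x 0)) := by
  simp only [Ff]
  refine tendsto_tsum_of_dominated_convergence (summable_Bnd hq hs hx hy) (fun n => ?_)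
    (Eventually.of_forall fun N => fun n => ?_)
  · have hz : Tendsto (fun N : ℕ => q^N * y) atTop (𝓝 0) := by
      simpa using (tendsto_pow_atTop_nhds_zero_of_norm_lt_one hq).mul_const y
    have hcont : Continuous fun z => trm q s x z n := by
      simp only [trm, xPoch]
      exact (continuous_const.mul
        (continuous_finset_prod _ fun j _ => continuous_id.add continuous_const)).div_const _
    exact (hcont.tendsto 0).comp hz
  · refine norm_trm_le hq hs ?_ n
    rw [norm_mul, norm_pow]
    have h1 : ‖q‖ ^ N ≤ 1 := pow_le_one₀ (norm_nonneg q) hq.le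
    nlinarith [norm_nonneg y]

end DC

section DC0
variable {q s c : ℂ}

@[simp] lemma qPoch_a0 (q : ℂ) (n : ℕ) : qPoch q 0 n = 1 := by simp [qPoch]

noncomputable def Bnd0 (q c : ℂ) (n : ℕ) : ℝ :=
  (∏ j ∈ Finset.range n, (‖c‖ * ‖q^2‖^j))
    / ((∏ i ∈ Finset.range n, (1 - ‖c‖*‖q‖^i)) * ‖qPoch q q n‖)

lemma one_sub_c_pos (hq : ‖q‖ < 1) (hc : ‖c‖ < 1) (i : ℕ) : 0 < 1 - ‖c‖*‖q‖^i := by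
  have h1 : ‖q‖ ^ i ≤ 1 := pow_le_one₀ (norm_nonneg q) hq.le
  nlinarith [norm_nonneg c]

lemma norm_htrm_le (hq : ‖q‖ < 1) (hc : ‖c‖ < 1) {z : ℂ} (hz : ‖z‖ ≤ ‖c‖) (n : ℕ) :
    ‖htrm q z n‖ ≤ Bnd0 q c n := by
  have hd2 : (0:ℝ) < ‖qPoch q q n‖ := norm_pos_iff.2 (qPoch_ne_zero hq hq n)
  have hDpos : (0:ℝ) < ∏ i ∈ Finset.range n, (1 - ‖c‖*‖q‖^i) :=
    Finset.prod_pos fun i _ => one_sub_c_pos hq hc i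
  have hX : ‖xPoch (q^2) z 0 n‖ ≤ ∏ j ∈ Finset.range n, (‖c‖ * ‖q^2‖^j) := by
    rw [xPoch, norm_prod]
    refine Finset.prod_le_prod (fun j _ => norm_nonneg _) (fun j _ => ?_)
    rw [zero_add, norm_mul, norm_pow]
    exact mul_le_mul_of_nonneg_right hz (by positivity)
  have hD : (∏ i ∈ Finset.range n, (1 - ‖c‖*‖q‖^i)) ≤ ‖qPoch q z n‖ := by
    rw [qPoch, norm_prod]
    refine Finset.prod_le_prod (fun i _ => (one_sub_c_pos hq hc i).le) (fun i _ => ?_)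
    refine le_trans ?_ (norm_sub_norm_le _ _)
    rw [norm_one, norm_mul, norm_pow]
    have h1 : ‖z‖ * ‖q‖^i ≤ ‖c‖ * ‖q‖^i := mul_le_mul_of_nonneg_right hz (by positivity)
    linarith
  rw [htrm, Bnd0, norm_div, norm_mul]
  exact div_le_div₀ (by positivity) hX (by positivity)
    (mul_le_mul_of_nonneg_right hD hd2.le)

lemma summable_Bnd0 (hq : ‖q‖ < 1) (hc : ‖c‖ < 1) : Summable (Bnd0 q c) := by
  have h0C : Tendsto (fun n : ℕ => (q:ℂ)^n) atTop (𝓝 0) :=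
    tendsto_pow_atTop_nhds_zero_of_norm_lt_one hq
  have h0R : Tendsto (fun n : ℕ => ‖q‖^n) atTop (𝓝 0) :=
    tendsto_pow_atTop_nhds_zero_of_lt_one (norm_nonneg q) hq
  have hq2 : ‖(q:ℂ)^2‖ < 1 := by rw [norm_pow]; nlinarith [norm_nonneg q]
  have h02 : Tendsto (fun n : ℕ => ‖(q:ℂ)^2‖^n) atTop (𝓝 0) :=
    tendsto_pow_atTop_nhds_zero_of_lt_one (norm_nonneg _) hq2
  refine auxR (m := fun n => (‖c‖ * ‖q^2‖^n) / ((1 - ‖c‖*‖q‖^n) * ‖1 - q^(n+1)‖))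
    (L := 0) one_pos
    (fun n => by
      have := one_sub_c_pos hq hc n
      have h4 : (0:ℝ) < ‖(1:ℂ) - q^(n+1)‖ := by
        refine norm_pos_iff.2 ?_
        have : (1:ℂ) - q*q^n ≠ 0 := one_sub_ne (norm_mul_pow_lt hq hq n)
        rwa [pow_succ']
      positivity) ?_ ?_
  · have hA : Tendsto (fun n => ‖c‖ * ‖q^2‖^n) atTop (𝓝 0) := by
      simpa using h02.const_mul ‖c‖
    have hC : Tendsto (fun n => 1 - ‖c‖*‖q‖^n) atTop (𝓝 1) := by
      simpa using (h0R.const_mul ‖c‖).const_sub 1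
    have hD : Tendsto (fun n => ‖(1:ℂ) - q^(n+1)‖) atTop (𝓝 1) := by
      have h1 : Tendsto (fun n : ℕ => (q:ℂ)^(n+1)) atTop (𝓝 0) := by
        simpa [pow_succ] using h0C.mul_const q
      have := (h1.const_sub 1).norm
      simpa using this
    have := hA.div (hC.mul hD) (by norm_num)
    convert this using 2 <;> simp
  · intro n
    have hd2 : (0:ℝ) < ‖qPoch q q n‖ := norm_pos_iff.2 (qPoch_ne_zero hq hq n)
    have hDpos : (0:ℝ) < ∏ i ∈ Finset.range n, (1 - ‖c‖*‖q‖^i) :=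
      Finset.prod_pos fun i _ => one_sub_c_pos hq hc i
    have hd3 := one_sub_c_pos hq hc n
    have hd4 : (0:ℝ) < ‖(1:ℂ) - q^(n+1)‖ := by
      refine norm_pos_iff.2 ?_
      have : (1:ℂ) - q*q^n ≠ 0 := one_sub_ne (norm_mul_pow_lt hq hq n)
      rwa [pow_succ']
    rw [Bnd0, Bnd0, Finset.prod_range_succ, Finset.prod_range_succ,
      qPoch_succ, norm_mul,
      show (1:ℂ) - q*q^n = 1 - q^(n+1) by rw [pow_succ']]
    beta_reduce
    rw [div_mul_div_comm, div_eq_div_iff (by positivity) (by positivity)]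
    ring

lemma Hf_zero (q : ℂ) : Hf q 0 = 1 := by
  rw [Hf, tsum_eq_single 0 ?_]
  · simp
  · intro n hn
    obtain ⟨m, rfl⟩ := Nat.exists_eq_succ_of_ne_zero hn
    rw [htrm, xPoch_succ]
    simp

lemma DC0 (hq : ‖q‖ < 1) (hc : ‖c‖ < 1) :
    Tendsto (fun N => Hf q (q^N * c)) atTop (𝓝 1) := by
  rw [show (1:ℂ) = Hf q 0 from (Hf_zero q).symm]
  simp only [Hf]
  refine tendsto_tsum_of_dominated_convergence (summable_Bnd0 hq hc) (fun n => ?_)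
    (Eventually.of_forall fun N => fun n => ?_)
  · have hz : Tendsto (fun N : ℕ => q^N * c) atTop (𝓝 0) := by
      simpa using (tendsto_pow_atTop_nhds_zero_of_norm_lt_one hq).mul_const c
    have hcont : ContinuousAt (fun z => htrm q z n) 0 := by
      simp only [htrm, xPoch, qPoch]
      refine ContinuousAt.div ?_ ?_ ?_
      · exact Continuous.continuousAt (continuous_finset_prod _ fun j _ =>
          continuous_const.add (continuous_id.mul continuous_const))
      · exact Continuous.continuousAt ((continuous_finset_prod _ fun i _ =>
          continuous_const.sub (continuous_id.mul continuous_const)).mul continuous_const)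
      · have : ∏ i ∈ Finset.range n, (1 - (0:ℂ) * q ^ i) = 1 := by simp
        simp only [this]
        simpa [qPoch] using qPoch_ne_zero hq hq n
    exact hcont.tendsto.comp hz
  · exact norm_htrm_le hq hc (by
      rw [norm_mul, norm_pow]
      have h1 : ‖q‖ ^ N ≤ 1 := pow_le_one₀ (norm_nonneg q) hq.le
      nlinarith [norm_nonneg c]) n

end DC0

section prod
variable {q s x y c w : ℂ}

lemma summable_log (hq : ‖q‖ < 1) (hw : ‖w‖ < 1) :
    Summable fun n => Complex.log (1 - w*q^n) := by
  have hgeo : Summable (fun n : ℕ => (3/2) * (‖w‖ * ‖q‖^n)) :=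
    ((summable_geometric_of_lt_one (norm_nonneg q) hq).mul_left ‖w‖).mul_left _
  refine Summable.of_norm_bounded_eventually_nat hgeo ?_
  have h0 : Tendsto (fun n : ℕ => ‖w * q^n‖) atTop (𝓝 0) := by
    have := ((tendsto_pow_atTop_nhds_zero_of_norm_lt_one hq).const_mul w).norm
    simpa using this
  filter_upwards [h0.eventually_le_const (show (0:ℝ) < 1/2 by norm_num)] with n hn
  have : Complex.log (1 - w*q^n) = Complex.log (1 + -(w*q^n)) := by rw [sub_eq_add_neg]
  rw [this]
  have hb := Complex.norm_log_one_add_half_le_self (z := -(w*q^n)) (by rwa [norm_neg])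
  rw [norm_neg, norm_mul, norm_pow] at hb
  linarith

lemma mult_one_sub (hq : ‖q‖ < 1) (hw : ‖w‖ < 1) :
    Multipliable fun k => 1 - w*q^k :=
  Complex.multipliable_of_summable_log (summable_log hq hw)

lemma tprod_ne_zero (hq : ‖q‖ < 1) (hw : ‖w‖ < 1) :
    (∏' k, (1 - w*q^k)) ≠ 0 := by
  have h := Complex.cexp_tsum_eq_tprod (f := fun n => 1 - w*q^n)
    (fun n => one_sub_ne (norm_mul_pow_lt hq hw n)) (summable_log hq hw)
  have h2 := h
  rw [← h2]
  exact Complex.exp_ne_zero _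

lemma E2gen (hq : ‖q‖ < 1) (hs : ‖s‖ < 1) (hx : ‖x‖ < 1) (hy : ‖y‖ < 1) :
    (∏' k, (1 - x*y*q^k)) * Ff q s x y = (∏' k, (1 - (-s*y)*q^k)) * Ff q s x 0 := by
  have hxy : ‖x*y‖ < 1 := by rw [norm_mul]; nlinarith [norm_nonneg x, norm_nonneg y]
  have hsy : ‖-s*y‖ < 1 := by
    rw [norm_mul, norm_neg]; nlinarith [norm_nonneg s, norm_nonneg y]
  have M1 : Multipliable fun k => 1 - x*y*q^k := mult_one_sub hq hxy
  have M2 : Multipliable fun k => 1 - (-s*y)*q^k := mult_one_sub hq hsy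
  have h1 : Tendsto (fun N => (∏ k ∈ Finset.range N, (1 - x*y*q^k)) * Ff q s x y)
      atTop (𝓝 ((∏' k, (1 - x*y*q^k)) * Ff q s x y)) :=
    M1.hasProd.tendsto_prod_nat.mul_const _
  have h2 : Tendsto (fun N => (∏ k ∈ Finset.range N, (1 - (-s*y)*q^k)) * Ff q s x (q^N*y))
      atTop (𝓝 ((∏' k, (1 - (-s*y)*q^k)) * Ff q s x 0)) :=
    M2.hasProd.tendsto_prod_nat.mul (DCy hq hs hx hy)
  exact tendsto_nhds_unique (h1.congr (iter2 hq hs hx hy)) h2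

lemma E0gen (hq : ‖q‖ < 1) (hc : ‖c‖ < 1) :
    (∏' k, (1 - c*q^k)) * Hf q c = 1 := by
  have M1 : Multipliable fun k => 1 - c*q^k := mult_one_sub hq hc
  have h1 : Tendsto (fun N => (∏ k ∈ Finset.range N, (1 - c*q^k)) * Hf q c)
      atTop (𝓝 ((∏' k, (1 - c*q^k)) * Hf q c)) :=
    M1.hasProd.tendsto_prod_nat.mul_const _
  exact tendsto_nhds_unique (h1.congr (iter0 hq hc)) (DC0 hq hc)

lemma F00_eq (q s : ℂ) : Ff q s 0 0 = Hf q (s^2) := by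
  refine tsum_congr fun n => ?_
  rw [trm, htrm]
  congr 1
  induction n with
  | zero => simp
  | succ n ih =>
    rw [xPoch_succ, xPoch_succ,
      show ((q:ℂ)^2)^n = q^n * q^n by rw [← pow_mul, mul_comm 2 n, pow_mul, sq]]
    linear_combination (s^2*(q^n*q^n)) * ih

end prod

end SQW


open SQW

/-- The `m = n = 1` Cauchy identity for spin q-Whittaker polynomials:
`∑_{i≥0} 𝔽_i(x) 𝔽*_i(y) = (-sx;q)_∞ (-sy;q)_∞ / ((s²;q)_∞ (xy;q)_∞)`,
where `𝔽_i(x) = x^i (-s/x;q)_i/(s²;q)_i` and `𝔽*_i(y) = y^i (-s/y;q)_i/(q;q)_i`. -/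
theorem stmt6 (q s x y : ℂ) (hq : ‖q‖ < 1) (hs : ‖s‖ < 1) (hx : ‖x‖ < 1) (hy : ‖y‖ < 1) :
    ∑' i : ℕ, (xPoch q s x i / qPoch q (s ^ 2) i) * (xPoch q s y i / qPoch q q i)
      = (∏' k : ℕ, (1 - (-s * x) * q ^ k)) * (∏' k : ℕ, (1 - (-s * y) * q ^ k)) /
        ((∏' k : ℕ, (1 - s ^ 2 * q ^ k)) * ∏' k : ℕ, (1 - x * y * q ^ k)) := by
  have hxy : ‖x*y‖ < 1 := by rw [norm_mul]; nlinarith [norm_nonneg x, norm_nonneg y]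
  have hL : (∑' i : ℕ, (xPoch q s x i / qPoch q (s ^ 2) i) * (xPoch q s y i / qPoch q q i))
      = Ff q s x y := tsum_congr fun i => by rw [trm, div_mul_div_comm]
  rw [hL]
  have h2 := E2gen hq hs hx hy
  have h1 := E2gen hq hs (show ‖(0:ℂ)‖ < 1 by simp) hx
  simp only [zero_mul, sub_zero, tprod_one, one_mul] at h1
  have hcomm := Ff_comm q s x 0
  have hF00 := F00_eq q s
  have h0 := E0gen hq (hs2 hs)
  have hPs := tprod_ne_zero hq (hs2 hs)
  have hPxy := tprod_ne_zero hq hxy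
  rw [eq_div_iff (mul_ne_zero hPs hPxy)]
  linear_combination (∏' k : ℕ, (1 - s^2*q^k)) * h2
    + ((∏' k : ℕ, (1 - s^2*q^k)) * (∏' k : ℕ, (1 - (-s * y) * q ^ k))) * hcomm
    + ((∏' k : ℕ, (1 - s^2*q^k)) * (∏' k : ℕ, (1 - (-s * y) * q ^ k))) * h1
    + ((∏' k : ℕ, (1 - s^2*q^k)) * (∏' k : ℕ, (1 - (-s * y) * q ^ k))
        * (∏' k : ℕ, (1 - (-s * x) * q ^ k))) * hF00
    + ((∏' k : ℕ, (1 - (-s * x) * q ^ k)) * (∏' k : ℕ, (1 - (-s * y) * q ^ k))) * h0
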